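/- Let $I$ be a positive random variable with density $k$ satisfying $k(x)=\int_0^\infty(\mathbb{P}(I>x)-\mathbb{P}(I>xe^v))\Pi(dv)+q\,\mathbb{P}(I>x)$ for all $x>0$, where $\Pi$ is a Lévy measure of a subordinator with Laplace exponent $\phi$, $\phi(1)>0$. Then with $g(x)=-\ln\int_x^\infty \mathbb{P}(I>u)du$, one has $g'(x)\ge \phi(1)$ for all $x$, and consequently $\mathbb{P}(I>cx)/\mathbb{P}(I>x)\le \frac{1}{x(c-1)\phi(1)}$ for every $c>1$ and $x>0$; in particular $x\mapsto\mathbb{P}(I>x)$ is rapidly varying: $\mathbb{P}(I>cx)/\mathbb{P}(I>x)\to 0$ as $x\to\infty$ for every $c>1$. -/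

import Mathlib

open MeasureTheory Filter Real Set
open scoped ENNReal Topology
open ProbabilityTheory


theorem tail_cont (ν : Measure ℝ) [IsProbabilityMeasure ν] (hν : ∀ x : ℝ, ν {x} = 0) (x : ℝ) :
    ContinuousAt (fun u => (ν (Set.Ioi u)).toReal) x := by
  have hcdf : ContinuousAt (cdf ν) x := by
    refine (monotone_cdf ν).continuousAt_iff_leftLim_eq_rightLim.mpr ?_
    have h1 : Function.rightLim (cdf ν) x = cdf ν x := (cdf ν).rightLim_eq x
    have h2 : ν {x} = ENNReal.ofReal (cdf ν x - Function.leftLim (cdf ν) x) := by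
      conv_lhs => rw [← measure_cdf (μ := ν)]
      exact (cdf ν).measure_singleton x
    have h3 : Function.leftLim (cdf ν) x ≤ cdf ν x :=
      (monotone_cdf ν).leftLim_le le_rfl
    have h4 : cdf ν x - Function.leftLim (cdf ν) x ≤ 0 := by
      by_contra h
      push_neg at h
      rw [hν x] at h2
      exact absurd h2.symm (by simp [(ENNReal.ofReal_pos.mpr h).ne'])
    rw [h1]
    linarith
  have hIic : ∀ u : ℝ, (ν (Set.Ioi u)).toReal = 1 - cdf ν u := by
    intro u
    rw [cdf_eq_real, measureReal_def]
    have h5 : ν (Set.Ioi u) = 1 - ν (Set.Iic u) := by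
      rw [← compl_Iic]
      exact prob_compl_eq_one_sub measurableSet_Iic
    rw [h5, ENNReal.toReal_sub_of_le prob_le_one ENNReal.one_ne_top, ENNReal.toReal_one]
  simp only [hIic]
  exact continuousAt_const.sub hcdf


theorem keyLemma (Pim : Measure ℝ) (ν : Measure ℝ) [IsFiniteMeasure ν] (T k : ℝ → ℝ)
    (q : ℝ) (hq : 0 ≤ q)
    (hT_anti : Antitone T) (hT_nonneg : ∀ u, 0 ≤ T u) (hT_meas : Measurable T)
    (hTν : ∀ z : ℝ, ν (Set.Ioi z) = ∫⁻ x in Set.Ioi z, ENNReal.ofReal (k x))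
    (heq : ∀ x > (0:ℝ), k x =
      (∫ v in Set.Ioi (0:ℝ), (T x - T (x * Real.exp v)) ∂Pim) + q * T x)
    (hTint : IntegrableOn T (Set.Ioi 0))
    (φ1 : ℝ) (hφ1 : φ1 = (∫ v in Set.Ioi (0:ℝ), (1 - Real.exp (-v)) ∂Pim) + q)
    {y : ℝ} (hy : 0 < y) :
    φ1 * ∫ u in Set.Ioi y, T u ≤ (ν (Set.Ioi y)).toReal := by
  set Pi0 := Pim.restrict (Set.Ioi 0) with hPi0
  set A := ∫⁻ v, ENNReal.ofReal (1 - Real.exp (-v)) ∂Pi0 with hA_def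
  have hexp_meas : Measurable fun v : ℝ => ENNReal.ofReal (1 - Real.exp (-v)) :=
    (measurable_const.sub (Real.measurable_exp.comp measurable_neg)).ennreal_ofReal
  have hAc : ∫ v in Set.Ioi (0:ℝ), (1 - Real.exp (-v)) ∂Pim = A.toReal := by
    rw [integral_eq_lintegral_of_nonneg_ae]
    · filter_upwards [ae_restrict_mem measurableSet_Ioi] with v hv
      have : Real.exp (-v) ≤ 1 := Real.exp_le_one_iff.mpr (by linarith [mem_Ioi.mp hv])
      simp only [Pi.zero_apply]
      linarith
    · exact (continuous_const.sub (Real.continuous_exp.comp continuous_neg)).aestronglyMeasurable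
  have hφ1' : φ1 = A.toReal + q := by rw [hφ1, hAc]
  set F := ∫ u in Set.Ioi y, T u with hF_def
  have hFint : IntegrableOn T (Set.Ioi y) := hTint.mono_set (Ioi_subset_Ioi hy.le)
  have hF_nonneg : 0 ≤ F :=
    setIntegral_nonneg measurableSet_Ioi fun u _ => hT_nonneg u
  have hTle : ∀ x : ℝ, 0 ≤ x → ∀ v : ℝ, 0 ≤ v → T (x * Real.exp v) ≤ T x := by
    intro x hx v hv
    exact hT_anti (by nlinarith [Real.one_le_exp hv])
  have hB_nonneg : ∀ x : ℝ, 0 < x → 0 ≤ ∫ v in Set.Ioi (0:ℝ), (T x - T (x * Real.exp v)) ∂Pim := by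
    intro x hx
    refine integral_nonneg_of_ae ?_
    filter_upwards [ae_restrict_mem measurableSet_Ioi] with v hv
    exact sub_nonneg.mpr (hTle x hx.le v (le_of_lt hv))
  have hstep2 : ∫⁻ x in Set.Ioi y, ENNReal.ofReal (q * T x) = ENNReal.ofReal (q * F) := by
    rw [← ofReal_integral_eq_lintegral_ofReal (hFint.const_mul q)
      (Eventually.of_forall fun x => mul_nonneg hq (hT_nonneg x)), integral_const_mul]
  have hνne : ν (Set.Ioi y) ≠ ∞ := measure_ne_top ν _
  rcases eq_or_ne A ∞ with hA | hA
  · -- A infinite : φ1 = q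
    have hφq : φ1 = q := by rw [hφ1', hA]; simp
    have hmono : ENNReal.ofReal (q * F) ≤ ν (Set.Ioi y) := by
      rw [hTν y, ← hstep2]
      refine lintegral_mono_ae ?_
      filter_upwards [ae_restrict_mem measurableSet_Ioi] with x hx
      have hx0 : 0 < x := lt_trans hy hx
      rw [heq x hx0]
      exact ENNReal.ofReal_le_ofReal (by linarith [hB_nonneg x hx0])
    rw [hφq]
    exact (ENNReal.ofReal_le_iff_le_toReal hνne).mp hmono
  · -- A finite
    have hsf : SigmaFinite Pi0 := by
      refine Measure.sigmaFinite_of_countable (countable_range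
        (fun n : ℕ => Set.Iic (0:ℝ) ∪ Set.Ioi (1/(n+1) : ℝ))) ?_ ?_
      · rintro s ⟨n, rfl⟩
        have hε : (0:ℝ) < 1/(n+1) := by positivity
        have h0 : Pi0 (Set.Iic (0:ℝ)) = 0 := by
          have hds : Set.Iic (0:ℝ) ∩ Set.Ioi 0 = ∅ := by
            ext z; simp only [mem_inter_iff, mem_Iic, mem_Ioi, mem_empty_iff_false, iff_false]
            intro ⟨h1, h2⟩; linarith
          rw [hPi0, Measure.restrict_apply measurableSet_Iic, hds, measure_empty]
        have hfin : Pi0 (Set.Ioi (1/(n+1):ℝ)) < ∞ := by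
          have hkey : ENNReal.ofReal (1 - Real.exp (-(1/(n+1):ℝ))) * Pi0 (Set.Ioi (1/(n+1):ℝ)) ≤ A := by
            calc ENNReal.ofReal (1 - Real.exp (-(1/(n+1):ℝ))) * Pi0 (Set.Ioi (1/(n+1):ℝ))
                = ∫⁻ _ in Set.Ioi (1/(n+1):ℝ), ENNReal.ofReal (1 - Real.exp (-(1/(n+1):ℝ))) ∂Pi0 := by
                  rw [setLIntegral_const]
              _ ≤ ∫⁻ v in Set.Ioi (1/(n+1):ℝ), ENNReal.ofReal (1 - Real.exp (-v)) ∂Pi0 := by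
                  refine setLIntegral_mono hexp_meas fun v hv => ?_
                  exact ENNReal.ofReal_le_ofReal (by
                    have := Real.exp_le_exp.mpr (neg_le_neg (le_of_lt (mem_Ioi.mp hv)))
                    linarith)
              _ ≤ A := setLIntegral_le_lintegral _ _
          by_contra hcon
          push_neg at hcon
          rw [top_le_iff.mp hcon, ENNReal.mul_top] at hkey
          · exact hA (top_le_iff.mp hkey)
          · refine (ENNReal.ofReal_pos.mpr ?_).ne'
            have : Real.exp (-(1/(n+1):ℝ)) < 1 := by
              rw [Real.exp_lt_one_iff]; linarith
            linarith
        calc Pi0 (Set.Iic (0:ℝ) ∪ Set.Ioi (1/(n+1):ℝ))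
            ≤ Pi0 (Set.Iic (0:ℝ)) + Pi0 (Set.Ioi (1/(n+1):ℝ)) := measure_union_le _ _
          _ < ∞ := by rw [h0, zero_add]; exact hfin
      · apply eq_univ_of_forall
        intro z
        rcases le_or_gt z 0 with hz | hz
        · exact ⟨_, ⟨0, rfl⟩, Or.inl hz⟩
        · obtain ⟨n, hn⟩ := exists_nat_one_div_lt hz
          exact ⟨_, ⟨n, rfl⟩, Or.inr hn⟩
    haveI : SigmaFinite Pi0 := hsf
    set W : ℝ → ℝ → ℝ≥0∞ := fun x v => ENNReal.ofReal (T x - T (x * Real.exp v)) with hW_def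
    have hWmeas : Measurable (Function.uncurry W) := by
      apply Measurable.ennreal_ofReal
      exact (hT_meas.comp measurable_fst).sub
        (hT_meas.comp (measurable_fst.mul (Real.measurable_exp.comp measurable_snd)))
    set I := fun x => ∫⁻ v, W x v ∂Pi0 with hI_def
    have hImeas : Measurable I := hWmeas.lintegral_prod_right
    have hswap : ∫⁻ x in Set.Ioi y, I x = ∫⁻ v, (∫⁻ x in Set.Ioi y, W x v) ∂Pi0 :=
      lintegral_lintegral_swap hWmeas.aemeasurable
    have hTv_int : ∀ v : ℝ, 0 ≤ v → IntegrableOn (fun x => T (x * Real.exp v)) (Set.Ioi y) := by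
      intro v hv
      refine Integrable.mono hFint
        ((hT_meas.comp (measurable_id.mul_const _)).aestronglyMeasurable) ?_
      filter_upwards [ae_restrict_mem measurableSet_Ioi] with x hx
      rw [Real.norm_eq_abs, Real.norm_eq_abs, abs_of_nonneg (hT_nonneg _),
        abs_of_nonneg (hT_nonneg _)]
      exact hTle x (le_of_lt (lt_trans hy hx)) v hv
    have hsub : ∀ v : ℝ, 0 ≤ v → ∫ x in Set.Ioi y, (T x - T (x * Real.exp v)) =
        F - Real.exp (-v) * ∫ u in Set.Ioi (y * Real.exp v), T u := by
      intro v hv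
      rw [integral_sub hFint (hTv_int v hv)]
      congr 1
      rw [integral_comp_mul_right_Ioi T y (Real.exp_pos v), smul_eq_mul, Real.exp_neg]
    have hF_anti : ∀ z : ℝ, y ≤ z → ∫ u in Set.Ioi z, T u ≤ F := by
      intro z hz
      refine setIntegral_mono_set hFint
        (Eventually.of_forall fun u => hT_nonneg u) ?_
      exact HasSubset.Subset.eventuallyLE (Ioi_subset_Ioi hz)
    have hG_eq : ∀ v : ℝ, 0 ≤ v → ∫⁻ x in Set.Ioi y, W x v =
        ENNReal.ofReal (F - Real.exp (-v) * ∫ u in Set.Ioi (y * Real.exp v), T u) := by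
      intro v hv
      have hint : Integrable (fun x => T x - T (x * Real.exp v))
          (volume.restrict (Set.Ioi y)) := hFint.sub (hTv_int v hv)
      rw [← hsub v hv, ← ofReal_integral_eq_lintegral_ofReal hint ?_]
      filter_upwards [ae_restrict_mem measurableSet_Ioi] with x hx
      exact sub_nonneg.mpr (hTle x (le_of_lt (lt_trans hy hx)) v hv)
    have hG_lower : ∀ v : ℝ, 0 ≤ v →
        ENNReal.ofReal F * ENNReal.ofReal (1 - Real.exp (-v)) ≤ ∫⁻ x in Set.Ioi y, W x v := by
      intro v hv
      rw [hG_eq v hv, ← ENNReal.ofReal_mul hF_nonneg]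
      refine ENNReal.ofReal_le_ofReal ?_
      have h1 := hF_anti (y * Real.exp v) (by nlinarith [Real.one_le_exp hv])
      nlinarith [Real.exp_pos (-v)]
    have hFz_lower : ∀ v : ℝ, 0 ≤ v →
        F - (y * Real.exp v - y) * T y ≤ ∫ u in Set.Ioi (y * Real.exp v), T u := by
      intro v hv
      have hz : y ≤ y * Real.exp v := by nlinarith [Real.one_le_exp hv]
      have hunion : Set.Ioc y (y * Real.exp v) ∪ Set.Ioi (y * Real.exp v) = Set.Ioi y :=
        Ioc_union_Ioi_eq_Ioi hz
      have hsplit : F = (∫ u in Set.Ioc y (y * Real.exp v), T u)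
          + ∫ u in Set.Ioi (y * Real.exp v), T u := by
        rw [hF_def, ← hunion, setIntegral_union (Ioc_disjoint_Ioi le_rfl) measurableSet_Ioi
          (hFint.mono_set Ioc_subset_Ioi_self) (hFint.mono_set (Ioi_subset_Ioi hz))]
      have hIoc : ∫ u in Set.Ioc y (y * Real.exp v), T u ≤ (y * Real.exp v - y) * T y := by
        calc ∫ u in Set.Ioc y (y * Real.exp v), T u
            ≤ ∫ _ in Set.Ioc y (y * Real.exp v), T y :=
              setIntegral_mono_on (hFint.mono_set Ioc_subset_Ioi_self)
                (integrableOn_const measure_Ioc_lt_top.ne) measurableSet_Ioc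
                (fun u hu => hT_anti hu.1.le)
          _ = (y * Real.exp v - y) * T y := by
              rw [setIntegral_const, Real.volume_real_Ioc_of_le (by linarith),
                smul_eq_mul]
      linarith
    have hG_upper : ∀ v : ℝ, 0 ≤ v → ∫⁻ x in Set.Ioi y, W x v ≤
        ENNReal.ofReal ((F + y * T y) * (1 - Real.exp (-v))) := by
      intro v hv
      rw [hG_eq v hv]
      refine ENNReal.ofReal_le_ofReal ?_
      have h1 := hFz_lower v hv
      have hev : Real.exp (-v) * Real.exp v = 1 := by
        rw [← Real.exp_add]; simp
      have h2 := mul_le_mul_of_nonneg_left h1 (Real.exp_pos (-v)).le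
      have h4 : Real.exp (-v) * (y * Real.exp v) = y := by
        rw [mul_comm y, ← mul_assoc, hev, one_mul]
      have h3 : Real.exp (-v) * (F - (y * Real.exp v - y) * T y)
          = Real.exp (-v) * F - y * T y + Real.exp (-v) * y * T y := by
        linear_combination (-(T y)) * h4
      linarith
    have hDfin : ∫⁻ x in Set.Ioi y, I x ≠ ∞ := by
      rw [hswap]
      have hle : ∫⁻ v, (∫⁻ x in Set.Ioi y, W x v) ∂Pi0 ≤
          ∫⁻ v, ENNReal.ofReal (F + y * T y) * ENNReal.ofReal (1 - Real.exp (-v)) ∂Pi0 := by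
        refine lintegral_mono_ae ?_
        filter_upwards [ae_restrict_mem measurableSet_Ioi] with v hv
        refine le_trans (hG_upper v (le_of_lt hv)) ?_
        rw [ENNReal.ofReal_mul (add_nonneg hF_nonneg (mul_nonneg hy.le (hT_nonneg y)))]
      rw [lintegral_const_mul _ hexp_meas] at hle
      exact ne_top_of_le_ne_top (ENNReal.mul_ne_top ENNReal.ofReal_ne_top hA) hle
    have hae_fin : ∀ᵐ x ∂(volume.restrict (Set.Ioi y)), I x < ∞ := ae_lt_top hImeas hDfin
    have hB_I : ∀ x : ℝ, 0 < x →
        ∫ v in Set.Ioi (0:ℝ), (T x - T (x * Real.exp v)) ∂Pim = (I x).toReal := by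
      intro x hx
      rw [integral_eq_lintegral_of_nonneg_ae]
      · filter_upwards [ae_restrict_mem measurableSet_Ioi] with v hv
        simp only [Pi.zero_apply]
        exact sub_nonneg.mpr (hTle x hx.le v (le_of_lt hv))
      · exact ((hT_meas.comp (measurable_const.mul Real.measurable_exp)).const_sub
          (T x)).aestronglyMeasurable
    have hmain : ENNReal.ofReal F * A + ENNReal.ofReal (q * F) ≤ ν (Set.Ioi y) := by
      rw [hTν y]
      have h1 : ∫⁻ x in Set.Ioi y, ENNReal.ofReal (k x) =
          ∫⁻ x in Set.Ioi y, (ENNReal.ofReal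
            (∫ v in Set.Ioi (0:ℝ), (T x - T (x * Real.exp v)) ∂Pim)
            + ENNReal.ofReal (q * T x)) := by
        refine lintegral_congr_ae ?_
        filter_upwards [ae_restrict_mem measurableSet_Ioi] with x hx
        rw [heq x (lt_trans hy hx),
          ENNReal.ofReal_add (hB_nonneg x (lt_trans hy hx)) (mul_nonneg hq (hT_nonneg x))]
      rw [h1]
      refine le_trans (add_le_add ?_ (le_of_eq hstep2.symm)) (le_lintegral_add _ _)
      have h2 : ∫⁻ x in Set.Ioi y, ENNReal.ofReal
          (∫ v in Set.Ioi (0:ℝ), (T x - T (x * Real.exp v)) ∂Pim) = ∫⁻ x in Set.Ioi y, I x := by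
        refine lintegral_congr_ae ?_
        filter_upwards [ae_restrict_mem measurableSet_Ioi, hae_fin] with x hx hfin
        rw [hB_I x (lt_trans hy hx), ENNReal.ofReal_toReal hfin.ne]
      rw [h2, hswap]
      calc ENNReal.ofReal F * A
          = ∫⁻ v, ENNReal.ofReal F * ENNReal.ofReal (1 - Real.exp (-v)) ∂Pi0 := by
            rw [lintegral_const_mul _ hexp_meas]
        _ ≤ ∫⁻ v, (∫⁻ x in Set.Ioi y, W x v) ∂Pi0 := by
            refine lintegral_mono_ae ?_
            filter_upwards [ae_restrict_mem measurableSet_Ioi] with v hv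
            exact hG_lower v (le_of_lt hv)
    have hfinal : ENNReal.ofReal (φ1 * F) ≤ ν (Set.Ioi y) := by
      have heq2 : ENNReal.ofReal (φ1 * F) = ENNReal.ofReal F * A + ENNReal.ofReal (q * F) := by
        rw [hφ1', show (A.toReal + q) * F = F * A.toReal + q * F by ring,
          ENNReal.ofReal_add (mul_nonneg hF_nonneg ENNReal.toReal_nonneg)
            (mul_nonneg hq hF_nonneg),
          ENNReal.ofReal_mul hF_nonneg, ENNReal.ofReal_toReal hA]
      rw [heq2]
      exact hmain
    exact (ENNReal.ofReal_le_iff_le_toReal hνne).mp hfinal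

theorem stmt10 (q : ℝ) (hq : 0 ≤ q)
    (Pim : Measure ℝ) (hsupp : ∀ᵐ x ∂Pim, 0 < x) (hne : Pim (Set.Ioi (0:ℝ)) ≠ 0)
    (ν : Measure ℝ) [IsProbabilityMeasure ν]
    (k : ℝ → ℝ) (hk : ν = volume.withDensity fun x => ENNReal.ofReal (k x))
    (heq : ∀ x > (0:ℝ), k x =
      (∫ v in Set.Ioi (0:ℝ),
        ((ν (Set.Ioi x)).toReal - (ν (Set.Ioi (x * Real.exp v))).toReal) ∂Pim)
      + q * (ν (Set.Ioi x)).toReal)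
    (hTint : IntegrableOn (fun u => (ν (Set.Ioi u)).toReal) (Set.Ioi 0))
    (hTpos : ∀ x > (0:ℝ), 0 < (ν (Set.Ioi x)).toReal)
    (φ1 : ℝ) (hφ1 : φ1 = (∫ v in Set.Ioi (0:ℝ), (1 - Real.exp (-v)) ∂Pim) + q)
    (hφ1pos : 0 < φ1) :
    (∀ x > (0:ℝ),
        φ1 ≤ deriv (fun y => -Real.log (∫ u in Set.Ioi y, (ν (Set.Ioi u)).toReal)) x)
    ∧ (∀ c > (1:ℝ), ∀ x > (0:ℝ),
        (ν (Set.Ioi (c*x))).toReal / (ν (Set.Ioi x)).toReal ≤ 1 / (x * (c-1) * φ1))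
    ∧ ∀ c > (1:ℝ),
        Tendsto (fun x => (ν (Set.Ioi (c*x))).toReal / (ν (Set.Ioi x)).toReal)
          atTop (𝓝 0) := by
  have hT_nonneg : ∀ u : ℝ, 0 ≤ (ν (Set.Ioi u)).toReal := fun u => ENNReal.toReal_nonneg
  have hT_anti : Antitone fun u : ℝ => (ν (Set.Ioi u)).toReal := fun a b hab =>
    ENNReal.toReal_mono (measure_ne_top ν _) (measure_mono (Ioi_subset_Ioi hab))
  have hT_meas : Measurable fun u : ℝ => (ν (Set.Ioi u)).toReal := hT_anti.measurable
  have hatom : ∀ x : ℝ, ν {x} = 0 := by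
    intro x
    rw [hk, withDensity_apply _ (measurableSet_singleton x),
      Measure.restrict_eq_zero.mpr Real.volume_singleton, lintegral_zero_measure]
  have hcont : Continuous fun u : ℝ => (ν (Set.Ioi u)).toReal :=
    continuous_iff_continuousAt.mpr fun x => tail_cont ν hatom x
  have hTν : ∀ z : ℝ, ν (Set.Ioi z) = ∫⁻ x in Set.Ioi z, ENNReal.ofReal (k x) := by
    intro z; rw [hk]; exact withDensity_apply _ measurableSet_Ioi
  have key : ∀ y : ℝ, 0 < y →
      φ1 * ∫ u in Set.Ioi y, (ν (Set.Ioi u)).toReal ≤ (ν (Set.Ioi y)).toReal :=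
    fun y hy => keyLemma Pim ν (fun u => (ν (Set.Ioi u)).toReal) k q hq hT_anti hT_nonneg
      hT_meas hTν heq hTint φ1 hφ1 hy
  have hsplitF : ∀ x z : ℝ, x ≤ z → 0 < x →
      ∫ u in Set.Ioi x, (ν (Set.Ioi u)).toReal =
        (∫ u in Set.Ioc x z, (ν (Set.Ioi u)).toReal)
        + ∫ u in Set.Ioi z, (ν (Set.Ioi u)).toReal := by
    intro x z hxz hx
    have hFi : IntegrableOn (fun u => (ν (Set.Ioi u)).toReal) (Set.Ioi x) :=
      hTint.mono_set (Ioi_subset_Ioi hx.le)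
    rw [← setIntegral_union (Ioc_disjoint_Ioi le_rfl) measurableSet_Ioi
      (hFi.mono_set Ioc_subset_Ioi_self) (hFi.mono_set (Ioi_subset_Ioi hxz)),
      Ioc_union_Ioi_eq_Ioi hxz]
  have hIocLB : ∀ x z : ℝ, x ≤ z → 0 < x →
      (z - x) * (ν (Set.Ioi z)).toReal ≤ ∫ u in Set.Ioc x z, (ν (Set.Ioi u)).toReal := by
    intro x z hxz hx
    have hFi : IntegrableOn (fun u => (ν (Set.Ioi u)).toReal) (Set.Ioc x z) :=
      (hTint.mono_set (Ioi_subset_Ioi hx.le)).mono_set Ioc_subset_Ioi_self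
    calc (z - x) * (ν (Set.Ioi z)).toReal
        = ∫ _ in Set.Ioc x z, (ν (Set.Ioi z)).toReal := by
          rw [setIntegral_const, Real.volume_real_Ioc_of_le (by linarith),
            smul_eq_mul]
      _ ≤ ∫ u in Set.Ioc x z, (ν (Set.Ioi u)).toReal :=
          setIntegral_mono_on (integrableOn_const measure_Ioc_lt_top.ne) hFi
            measurableSet_Ioc (fun u hu => hT_anti hu.2)
  have hF_nonneg : ∀ z : ℝ, 0 ≤ ∫ u in Set.Ioi z, (ν (Set.Ioi u)).toReal :=
    fun z => setIntegral_nonneg measurableSet_Ioi fun u _ => hT_nonneg u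
  have hFpos : ∀ x : ℝ, 0 < x → 0 < ∫ u in Set.Ioi x, (ν (Set.Ioi u)).toReal := by
    intro x hx
    have h1 := hIocLB x (x+1) (by linarith) hx
    have h2 := hF_nonneg (x+1)
    have h3 := hTpos (x+1) (by linarith)
    rw [hsplitF x (x+1) (by linarith) hx]
    nlinarith
  have hpart2 : ∀ c > (1:ℝ), ∀ x > (0:ℝ),
      (ν (Set.Ioi (c*x))).toReal / (ν (Set.Ioi x)).toReal ≤ 1 / (x * (c-1) * φ1) := by
    intro c hc x hx
    have hcx : x ≤ c*x := by nlinarith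
    have h1 := hIocLB x (c*x) hcx hx
    have h2 := hF_nonneg (c*x)
    have h3 := key x hx
    have h4 := hsplitF x (c*x) hcx hx
    have hden : 0 < x * (c-1) * φ1 := by
      apply mul_pos (mul_pos hx (by linarith)) hφ1pos
    rw [div_le_div_iff₀ (hTpos x hx) hden]
    nlinarith [hTpos (c*x) (by nlinarith), hF_nonneg x]
  refine ⟨?_, hpart2, ?_⟩
  · -- derivative bound
    intro x hx
    have ha : (0:ℝ) < x/2 := by linarith
    have hax : x/2 < x := by linarith
    have hEv : (fun b => ∫ u in Set.Ioi b, (ν (Set.Ioi u)).toReal) =ᶠ[𝓝 x]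
        (fun b => (∫ u in Set.Ioi (x/2), (ν (Set.Ioi u)).toReal)
          - ∫ u in (x/2)..b, (ν (Set.Ioi u)).toReal) := by
      filter_upwards [Ioi_mem_nhds hax] with b hb
      have hab : x/2 ≤ b := (mem_Ioi.mp hb).le
      rw [intervalIntegral.integral_of_le hab, hsplitF (x/2) b hab ha]
      ring
    have hii : IntervalIntegrable (fun u => (ν (Set.Ioi u)).toReal) volume (x/2) x := by
      rw [intervalIntegrable_iff]
      refine hTint.mono_set ?_
      rw [Set.uIoc_of_le hax.le]
      exact fun u hu => lt_trans ha hu.1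
    have hd1 : HasDerivAt (fun b => ∫ u in (x/2)..b, (ν (Set.Ioi u)).toReal)
        ((ν (Set.Ioi x)).toReal) x :=
      intervalIntegral.integral_hasDerivAt_right hii
        (hT_meas.aestronglyMeasurable.stronglyMeasurableAtFilter)
        (hcont.continuousAt)
    have hdF : HasDerivAt (fun b => ∫ u in Set.Ioi b, (ν (Set.Ioi u)).toReal)
        (-(ν (Set.Ioi x)).toReal) x :=
      HasDerivAt.congr_of_eventuallyEq (hd1.const_sub _) hEv
    have hFx : (∫ u in Set.Ioi x, (ν (Set.Ioi u)).toReal) ≠ 0 := (hFpos x hx).ne'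
    have hlog : HasDerivAt (fun y => -Real.log (∫ u in Set.Ioi y, (ν (Set.Ioi u)).toReal))
        (-(-(ν (Set.Ioi x)).toReal / ∫ u in Set.Ioi x, (ν (Set.Ioi u)).toReal)) x :=
      (hdF.log hFx).neg
    rw [hlog.deriv, neg_div, neg_neg]
    rw [le_div_iff₀ (hFpos x hx)]
    exact key x hx
  · -- tendsto
    intro c hc
    refine squeeze_zero' (g := fun x => 1 / (x * (c-1) * φ1))
      (Eventually.of_forall fun x =>
        div_nonneg ENNReal.toReal_nonneg ENNReal.toReal_nonneg) ?_ ?_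
    · filter_upwards [eventually_gt_atTop (0:ℝ)] with x hx
      exact hpart2 c hc x hx
    · have h : Tendsto (fun x : ℝ => x * (c-1) * φ1) atTop atTop :=
        (tendsto_id.atTop_mul_const (by linarith : (0:ℝ) < c-1)).atTop_mul_const hφ1pos
      have := h.inv_tendsto_atTop
      refine this.congr fun x => ?_
      simp [Pi.inv_apply, one_div]
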